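/- arXiv:math/0109174 — 2 statements merged into one kernel-verified Lean document; each statement's English description precedes it below -/
import Mathlib

section
/- Let S > 0 and σ > 0. Let θ : (0,S] → [0,∞) be integrable with σ·∫₀^S θ(τ) dτ ≤ log 2, let h : (0,S] → ℝ satisfy |h(s) − 2/s| ≤ θ(s) for all s ∈ (0,S], let F : (0,S] → ℝ be integrable, and let y : (0,S] → ℝ be differentiable with y′(s) + σ·h(s)·y(s) = F(s) on (0,S] and s^{2σ}·y(s) → 0 as s → 0⁺. Then |y(s)| ≤ 4·∫₀^s |F(τ)| dτ for all s ∈ (0,S]. -/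
open MeasureTheory Set

/-- Scalar form of the Transport Lemma (6.2): if `y' + σ·h·y = F` on `(0,S]`,
where `h` is close to `2/s` (`|h - 2/s| ≤ θ` with `σ∫₀^S θ ≤ log 2`), and
`s^{2σ}·y → 0` as `s → 0⁺`, then `|y s| ≤ 4∫₀^s |F|`. -/
theorem stmt_5 (S sg : ℝ) (hS : 0 < S) (hsg : 0 < sg)
    (θ h F y : ℝ → ℝ)
    (hθ_nonneg : ∀ s ∈ Ioc (0:ℝ) S, 0 ≤ θ s)
    (hθ_int : IntegrableOn θ (Ioc 0 S))
    (hθ_small : sg * (∫ τ in (0:ℝ)..S, θ τ) ≤ Real.log 2)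
    (hh : ∀ s ∈ Ioc (0:ℝ) S, |h s - 2 / s| ≤ θ s)
    (hF_int : IntegrableOn F (Ioc 0 S))
    (hy : ∀ s ∈ Ioc (0:ℝ) S, HasDerivAt y (F s - sg * h s * y s) s)
    (hy0 : Filter.Tendsto (fun s => s ^ (2 * sg) * y s)
      (nhdsWithin 0 (Ioi 0)) (nhds 0)) :
    ∀ s ∈ Ioc (0:ℝ) S, |y s| ≤ 4 * ∫ τ in (0:ℝ)..s, |F τ| := by
  -- the "remainder" coefficient g = h - 2/s, made measurable by solving for it
  set g : ℝ → ℝ := fun t => (F t - deriv y t - sg * (2 / t) * y t) / (sg * y t) with hg_def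
  have hgy : ∀ t ∈ Ioc (0:ℝ) S, g t * y t = (h t - 2 / t) * y t := by
    intro t ht
    by_cases hyt : y t = 0
    · simp [hg_def, hyt]
    · have hd := (hy t ht).deriv
      have h1 : sg * y t ≠ 0 := mul_ne_zero hsg.ne' hyt
      rw [hg_def]
      simp only [hd]
      field_simp
      ring
  have hgθ : ∀ t ∈ Ioc (0:ℝ) S, |g t| ≤ θ t := by
    intro t ht
    by_cases hyt : y t = 0
    · simp only [hg_def, hyt, mul_zero, div_zero, abs_zero]
      exact hθ_nonneg t ht
    · have hd := (hy t ht).deriv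
      have h1 : sg * y t ≠ 0 := mul_ne_zero hsg.ne' hyt
      have hge : g t = h t - 2 / t := by
        rw [hg_def]
        simp only [hd]
        rw [show F t - (F t - sg * h t * y t) - sg * (2 / t) * y t
            = (h t - 2 / t) * (sg * y t) by ring]
        exact mul_div_cancel_right₀ _ h1
      rw [hge]; exact hh t ht
  have hyc : ∀ t ∈ Ioc (0:ℝ) S, ContinuousAt y t := fun t ht => (hy t ht).continuousAt
  have hg_meas : AEStronglyMeasurable g ((volume : Measure ℝ).restrict (Ioc 0 S)) := by
    have hym : AEMeasurable y ((volume : Measure ℝ).restrict (Ioc 0 S)) :=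
      ContinuousOn.aemeasurable (fun t ht => (hyc t ht).continuousWithinAt) measurableSet_Ioc
    have hFm : AEMeasurable F ((volume : Measure ℝ).restrict (Ioc 0 S)) :=
      hF_int.aemeasurable
    have hdm : AEMeasurable (deriv y) ((volume : Measure ℝ).restrict (Ioc 0 S)) :=
      (measurable_deriv y).aemeasurable
    have h2t : AEMeasurable (fun t : ℝ => 2 / t)
        ((volume : Measure ℝ).restrict (Ioc 0 S)) :=
      (measurable_const.div measurable_id).aemeasurable
    exact (((hFm.sub hdm).sub ((aemeasurable_const.mul h2t).mul hym)).div
      (aemeasurable_const.mul hym)).aestronglyMeasurable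
  have hg_int : IntegrableOn g (Ioc 0 S) := by
    refine hθ_int.mono' hg_meas ?_
    refine (ae_restrict_iff' measurableSet_Ioc).2 (Filter.Eventually.of_forall fun t ht => ?_)
    simpa [Real.norm_eq_abs] using hgθ t ht
  -- the weighted function w
  set w : ℝ → ℝ := fun t => t ^ (2 * sg) * y t with hw_def
  have hw_deriv : ∀ t ∈ Ioc (0:ℝ) S,
      HasDerivAt w (t ^ (2 * sg) * F t - sg * g t * w t) t := by
    intro t ht
    have h1 : HasDerivAt (fun u : ℝ => u ^ (2 * sg)) (2 * sg * t ^ (2 * sg - 1)) t :=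
      Real.hasDerivAt_rpow_const (Or.inl ht.1.ne')
    have h2 := h1.mul (hy t ht)
    convert h2 using 1
    · rfl
    · rfl
    · rfl
    have hgy' := hgy t ht
    have ht1 : t ^ (2 * sg - 1) = t ^ (2 * sg) / t := by
      rw [Real.rpow_sub ht.1, Real.rpow_one]
    rw [hw_def, ht1]
    have htne : t ≠ 0 := ht.1.ne'
    linear_combination (-(sg * t ^ (2 * sg))) * hgy'
  have hwcontIoc : ∀ t ∈ Ioc (0:ℝ) S, ContinuousAt w t :=
    fun t ht => (hw_deriv t ht).continuousAt
  -- key estimate for each r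
  have key : ∀ s ∈ Ioc (0:ℝ) S, ∀ r ∈ Ioc (0:ℝ) s,
      |w s| ≤ (10 / 3) * (|w r| + s ^ (2 * sg) * ∫ τ in (0:ℝ)..s, |F τ|) := by
    intro s hs r hr
    have hrs : r ≤ s := hr.2
    have hsub : Icc r s ⊆ Ioc (0:ℝ) S :=
      fun t ht => ⟨lt_of_lt_of_le hr.1 ht.1, le_trans ht.2 hs.2⟩
    have hwcont : ContinuousOn (fun t => |w t|) (Icc r s) :=
      fun t ht => ((hwcontIoc t (hsub ht)).continuousWithinAt).abs
    obtain ⟨t₀, ht₀, hmax⟩ :=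
      isCompact_Icc.exists_isMaxOn (nonempty_Icc.2 hrs) hwcont
    set M := |w t₀| with hM_def
    have hM : ∀ t ∈ Icc r s, |w t| ≤ M := fun t ht => hmax ht
    have hM0 : 0 ≤ M := abs_nonneg _
    have hrt : r ≤ t₀ := ht₀.1
    have hsubI : Ioc r t₀ ⊆ Ioc (0:ℝ) S := fun t ht =>
      hsub ⟨le_of_lt ht.1, le_trans ht.2 ht₀.2⟩
    have hsubIcc : Icc r t₀ ⊆ Icc r s := Icc_subset_Icc le_rfl ht₀.2
    -- integrability of the derivative
    have hF_sub : IntegrableOn F (Ioc r t₀) := hF_int.mono_set hsubI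
    have hθ_sub : IntegrableOn θ (Ioc r t₀) := hθ_int.mono_set hsubI
    have hg_sub : IntegrableOn g (Ioc r t₀) := hg_int.mono_set hsubI
    have hw_contOn : ContinuousOn w (Ioc r t₀) := fun t ht =>
      (hwcontIoc t (hsubI ht)).continuousWithinAt
    have hrpow_cont : ContinuousOn (fun τ : ℝ => τ ^ (2 * sg)) (Ioc r t₀) := fun τ hτ =>
      (Real.continuousAt_rpow_const τ (2 * sg)
        (Or.inl (lt_of_lt_of_le hr.1 (le_of_lt hτ.1)).ne')).continuousWithinAt
    have hA_int : IntegrableOn (fun τ => τ ^ (2 * sg) * F τ) (Ioc r t₀) := by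
      refine Integrable.mono' ((hF_sub.abs).const_mul (s ^ (2 * sg)))
        ((hrpow_cont.aestronglyMeasurable measurableSet_Ioc).mul
          hF_sub.aestronglyMeasurable) ?_
      refine (ae_restrict_iff' measurableSet_Ioc).2 (Filter.Eventually.of_forall fun τ hτ => ?_)
      have hτ0 : 0 < τ := lt_of_lt_of_le hr.1 (le_of_lt hτ.1)
      have hτs : τ ≤ s := le_trans hτ.2 ht₀.2
      have h1 : τ ^ (2 * sg) ≤ s ^ (2 * sg) :=
        Real.rpow_le_rpow hτ0.le hτs (by positivity)
      have h2 : (0:ℝ) ≤ τ ^ (2 * sg) := Real.rpow_nonneg hτ0.le _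
      rw [Real.norm_eq_abs, abs_mul, abs_of_nonneg h2]
      exact mul_le_mul_of_nonneg_right h1 (abs_nonneg _) |>.trans
        (le_of_eq (by ring))
    have hGW_int : IntegrableOn (fun τ => sg * g τ * w τ) (Ioc r t₀) := by
      refine Integrable.mono' (((hθ_sub.const_mul sg).mul_const M))
        ((aestronglyMeasurable_const.mul
          (hg_meas.mono_measure (Measure.restrict_mono hsubI le_rfl))).mul
          (hw_contOn.aestronglyMeasurable measurableSet_Ioc)) ?_
      refine (ae_restrict_iff' measurableSet_Ioc).2 (Filter.Eventually.of_forall fun τ hτ => ?_)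
      have hτS : τ ∈ Ioc (0:ℝ) S := hsubI hτ
      have hτIcc : τ ∈ Icc r s := hsubIcc ⟨le_of_lt hτ.1, hτ.2⟩
      have h1 : |g τ| ≤ θ τ := hgθ τ hτS
      have h2 : |w τ| ≤ M := hM τ hτIcc
      have hθ0 := hθ_nonneg τ hτS
      rw [Real.norm_eq_abs, abs_mul, abs_mul, abs_of_nonneg hsg.le]
      exact mul_le_mul (mul_le_mul_of_nonneg_left h1 hsg.le) h2 (abs_nonneg _)
        (mul_nonneg hsg.le hθ0)
    have hderiv_int : IntegrableOn
        (fun τ => τ ^ (2 * sg) * F τ - sg * g τ * w τ) (Ioc r t₀) := hA_int.sub hGW_int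
    have hftc : w t₀ - w r = ∫ τ in r..t₀, (τ ^ (2 * sg) * F τ - sg * g τ * w τ) := by
      refine (intervalIntegral.integral_eq_sub_of_hasDerivAt (fun τ hτ => ?_)
        ((intervalIntegrable_iff_integrableOn_Ioc_of_le hrt).2 hderiv_int)).symm
      rw [uIcc_of_le hrt] at hτ
      exact hw_deriv τ (hsub (hsubIcc hτ))
    -- bound the integral
    have habs : |∫ τ in r..t₀, (τ ^ (2 * sg) * F τ - sg * g τ * w τ)|
        ≤ ∫ τ in r..t₀, (s ^ (2 * sg) * |F τ| + sg * θ τ * M) := by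
      have h1 : |∫ τ in r..t₀, (τ ^ (2 * sg) * F τ - sg * g τ * w τ)|
          ≤ ∫ τ in r..t₀, |τ ^ (2 * sg) * F τ - sg * g τ * w τ| :=
        intervalIntegral.abs_integral_le_integral_abs hrt
      refine h1.trans (intervalIntegral.integral_mono_on hrt
        ((intervalIntegrable_iff_integrableOn_Ioc_of_le hrt).2 hderiv_int.abs)
        ((intervalIntegrable_iff_integrableOn_Ioc_of_le hrt).2
          (((hF_sub.abs).const_mul (s ^ (2 * sg))).add
            ((hθ_sub.const_mul sg).mul_const M))) ?_)
      intro τ hτ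
      have hτS : τ ∈ Ioc (0:ℝ) S := hsub (hsubIcc hτ)
      have hτIcc : τ ∈ Icc r s := hsubIcc hτ
      have hτ0 : 0 < τ := hτS.1
      have hτs : τ ≤ s := hτIcc.2
      have hb1 : τ ^ (2 * sg) ≤ s ^ (2 * sg) :=
        Real.rpow_le_rpow hτ0.le hτs (by positivity)
      have hb2 : (0:ℝ) ≤ τ ^ (2 * sg) := Real.rpow_nonneg hτ0.le _
      calc |τ ^ (2 * sg) * F τ - sg * g τ * w τ|
          ≤ |τ ^ (2 * sg) * F τ| + |sg * g τ * w τ| := abs_sub _ _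
        _ = τ ^ (2 * sg) * |F τ| + sg * |g τ| * |w τ| := by
            rw [abs_mul, abs_mul, abs_mul, abs_of_nonneg hb2, abs_of_nonneg hsg.le]
        _ ≤ s ^ (2 * sg) * |F τ| + sg * θ τ * M := by
            have hθ0 := hθ_nonneg τ hτS
            have : sg * |g τ| * |w τ| ≤ sg * θ τ * M :=
              mul_le_mul (mul_le_mul_of_nonneg_left (hgθ τ hτS) hsg.le) (hM τ hτIcc)
                (abs_nonneg _) (mul_nonneg hsg.le hθ0)
            have h4 : τ ^ (2 * sg) * |F τ| ≤ s ^ (2 * sg) * |F τ| :=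
              mul_le_mul_of_nonneg_right hb1 (abs_nonneg _)
            linarith
    have hsplit : (∫ τ in r..t₀, (s ^ (2 * sg) * |F τ| + sg * θ τ * M))
        = s ^ (2 * sg) * (∫ τ in r..t₀, |F τ|) + sg * (∫ τ in r..t₀, θ τ) * M := by
      rw [intervalIntegral.integral_add
        ((intervalIntegrable_iff_integrableOn_Ioc_of_le hrt).2
          ((hF_sub.abs).const_mul (s ^ (2 * sg))))
        ((intervalIntegrable_iff_integrableOn_Ioc_of_le hrt).2
          ((hθ_sub.const_mul sg).mul_const M)),
        intervalIntegral.integral_const_mul, intervalIntegral.integral_mul_const,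
        intervalIntegral.integral_const_mul]
    -- compare the integrals with the full ones
    have hFI : (∫ τ in r..t₀, |F τ|) ≤ ∫ τ in (0:ℝ)..s, |F τ| := by
      refine intervalIntegral.integral_mono_interval hr.1.le hrt
        (le_trans ht₀.2 le_rfl) ?_ ?_
      · refine (ae_restrict_iff' measurableSet_Ioc).2
          (Filter.Eventually.of_forall fun τ hτ => abs_nonneg _)
      · exact (intervalIntegrable_iff_integrableOn_Ioc_of_le hs.1.le).2
          ((hF_int.mono_set (Ioc_subset_Ioc le_rfl hs.2)).abs)
    have hθI : sg * (∫ τ in r..t₀, θ τ) ≤ Real.log 2 := by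
      refine le_trans (mul_le_mul_of_nonneg_left ?_ hsg.le) hθ_small
      refine intervalIntegral.integral_mono_interval hr.1.le hrt
        (le_trans ht₀.2 hs.2) ?_ ?_
      · refine (ae_restrict_iff' measurableSet_Ioc).2
          (Filter.Eventually.of_forall fun τ hτ => hθ_nonneg τ hτ)
      · exact (intervalIntegrable_iff_integrableOn_Ioc_of_le hS.le).2 hθ_int
    have hlog : Real.log 2 ≤ 0.7 := by
      have := Real.log_two_lt_d9
      linarith
    have hIF0 : (0:ℝ) ≤ ∫ τ in (0:ℝ)..s, |F τ| :=
      intervalIntegral.integral_nonneg hs.1.le (fun τ _ => abs_nonneg _)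
    have hs2 : (0:ℝ) < s ^ (2 * sg) := Real.rpow_pos_of_pos hs.1 _
    -- assemble
    have hMbound : M ≤ |w r| + s ^ (2 * sg) * (∫ τ in (0:ℝ)..s, |F τ|) + 0.7 * M := by
      have h0 : |w t₀| ≤ |w r| + |∫ τ in r..t₀, (τ ^ (2 * sg) * F τ - sg * g τ * w τ)| := by
        have : w t₀ = w r + (w t₀ - w r) := by ring
        calc |w t₀| = |w r + (w t₀ - w r)| := by rw [← this]
          _ ≤ |w r| + |w t₀ - w r| := abs_add_le _ _
          _ = |w r| + |∫ τ in r..t₀, (τ ^ (2 * sg) * F τ - sg * g τ * w τ)| := by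
              rw [hftc]
      have h1 : sg * (∫ τ in r..t₀, θ τ) * M ≤ 0.7 * M :=
        mul_le_mul_of_nonneg_right (hθI.trans hlog) hM0
      have h2 : s ^ (2 * sg) * (∫ τ in r..t₀, |F τ|)
          ≤ s ^ (2 * sg) * (∫ τ in (0:ℝ)..s, |F τ|) :=
        mul_le_mul_of_nonneg_left hFI hs2.le
      calc M ≤ |w r| + |∫ τ in r..t₀, (τ ^ (2 * sg) * F τ - sg * g τ * w τ)| := h0
        _ ≤ |w r| + (s ^ (2 * sg) * (∫ τ in r..t₀, |F τ|)
              + sg * (∫ τ in r..t₀, θ τ) * M) := by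
            have := habs.trans (le_of_eq hsplit)
            linarith
        _ ≤ |w r| + s ^ (2 * sg) * (∫ τ in (0:ℝ)..s, |F τ|) + 0.7 * M := by linarith
    have hMfinal : M ≤ (10 / 3) * (|w r| + s ^ (2 * sg) * ∫ τ in (0:ℝ)..s, |F τ|) := by
      nlinarith [hMbound]
    exact le_trans (hM s (right_mem_Icc.2 hrs)) hMfinal
  -- pass to the limit r → 0⁺
  intro s hs
  have hIF0 : (0:ℝ) ≤ ∫ τ in (0:ℝ)..s, |F τ| :=
    intervalIntegral.integral_nonneg hs.1.le (fun τ _ => abs_nonneg _)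
  have hs2 : (0:ℝ) < s ^ (2 * sg) := Real.rpow_pos_of_pos hs.1 _
  have hws : |w s| ≤ (10 / 3) * (s ^ (2 * sg) * ∫ τ in (0:ℝ)..s, |F τ|) := by
    have htend : Filter.Tendsto
        (fun r => (10 / 3) * (|w r| + s ^ (2 * sg) * ∫ τ in (0:ℝ)..s, |F τ|))
        (nhdsWithin 0 (Ioi 0))
        (nhds ((10 / 3) * (0 + s ^ (2 * sg) * ∫ τ in (0:ℝ)..s, |F τ|))) := by
      refine Filter.Tendsto.const_mul _ (Filter.Tendsto.add_const _ ?_)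
      have := hy0.abs
      simpa using this
    have hev : ∀ᶠ r in nhdsWithin 0 (Ioi 0),
        |w s| ≤ (10 / 3) * (|w r| + s ^ (2 * sg) * ∫ τ in (0:ℝ)..s, |F τ|) := by
      have hmem : Ioc (0:ℝ) s ∈ nhdsWithin 0 (Ioi 0) := by
        refine Filter.mem_of_superset
          (Filter.inter_mem (mem_nhdsWithin_of_mem_nhds (Iio_mem_nhds hs.1))
            self_mem_nhdsWithin) ?_
        rintro x ⟨hx1, hx2⟩
        exact ⟨hx2, le_of_lt hx1⟩
      filter_upwards [hmem] with r hr
      exact key s hs r hr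
    have := ge_of_tendsto htend hev
    simpa using this
  -- conclude
  have hws' : s ^ (2 * sg) * |y s| ≤ (10 / 3) * (s ^ (2 * sg) * ∫ τ in (0:ℝ)..s, |F τ|) := by
    have : |w s| = s ^ (2 * sg) * |y s| := by
      rw [hw_def]
      rw [abs_mul, abs_of_nonneg hs2.le]
    linarith [hws, this.symm.le, this.le]
  have hy_le : |y s| ≤ (10 / 3) * ∫ τ in (0:ℝ)..s, |F τ| := by
    have h1 : s ^ (2 * sg) * |y s| ≤ s ^ (2 * sg) * ((10 / 3) * ∫ τ in (0:ℝ)..s, |F τ|) := by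
      calc s ^ (2 * sg) * |y s| ≤ (10 / 3) * (s ^ (2 * sg) * ∫ τ in (0:ℝ)..s, |F τ|) := hws'
        _ = s ^ (2 * sg) * ((10 / 3) * ∫ τ in (0:ℝ)..s, |F τ|) := by ring
    exact le_of_mul_le_mul_left h1 hs2
  linarith [hIF0]
end

section
/- Let S > 0 and Λ ≥ 0. Let θ : (0,S] → [0,∞) be integrable with ∫₀^S θ(τ) dτ ≤ Λ, let h : (0,S] → ℝ satisfy h(s) ≥ 2/s − θ(s) for all s ∈ (0,S], let F : (0,S] → ℝ be continuous with σ ↦ σ²·|F(σ)| integrable on (0,S], and let y : (0,S] → ℝ be differentiable with y′(s) + h(s)·y(s) = F(s) on (0,S] and s²·y(s) → 0 as s → 0⁺. Then |y(s)| ≤ e^Λ · s^{−2} · ∫₀^s σ²·|F(σ)| dσ for all s ∈ (0,S]. -/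
open MeasureTheory Set Filter Topology

/-- Grönwall-type comparison with lower semicontinuous majorant of the coefficient. -/
theorem my_gronwall_aux {ε s : ℝ} (hε : 0 < ε) (hεs : ε ≤ s)
    (u φ θ : ℝ → ℝ) (g : ℝ → ENNReal)
    (hu_cont : ContinuousOn u (Icc ε s))
    (hu_nonneg : ∀ x ∈ Icc ε s, 0 ≤ u x)
    (hu' : ∀ x ∈ Ico ε s, ∃ L, L ≤ φ x + θ x * u x ∧
        Filter.Tendsto (slope u x) (nhdsWithin x (Ioi x)) (nhds L))
    (hφ_cont : ContinuousOn φ (Icc ε s))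
    (hφ_nonneg : ∀ x ∈ Icc ε s, 0 ≤ φ x)
    (hg_lsc : LowerSemicontinuous g)
    (hgθ : ∀ x ∈ Ico ε s, ENNReal.ofReal (θ x) ≤ g x)
    (hg_fin : ∀ᵐ x, g x ≠ ⊤)
    (hG_int : IntegrableOn (fun x => (g x).toReal) (Icc ε s)) :
    u s ≤ Real.exp (∫ τ in ε..s, (g τ).toReal) * (u ε + ∫ τ in ε..s, φ τ) := by
  set G : ℝ → ℝ := fun x => (g x).toReal with hG
  set Θ : ℝ → ℝ := fun x => ∫ τ in ε..x, G τ with hΘdef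
  have hG_nonneg : ∀ x, 0 ≤ G x := fun _ => ENNReal.toReal_nonneg
  have hΘ_cont : ContinuousOn Θ (Icc ε s) := by
    have := intervalIntegral.continuousOn_primitive_interval
      (a := ε) (b := s) (μ := volume) (f := G) (by rwa [uIcc_of_le hεs])
    rwa [uIcc_of_le hεs] at this
  have hΘ_nonneg : ∀ x ∈ Icc ε s, 0 ≤ Θ x := fun x hx =>
    intervalIntegral.integral_nonneg hx.1 (fun τ _ => hG_nonneg τ)
  set f : ℝ → ℝ := fun x => Real.exp (-Θ x) * u x with hf
  set B : ℝ → ℝ := fun x => u ε + ∫ τ in ε..x, φ τ with hB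
  have hf_cont : ContinuousOn f (Icc ε s) :=
    (Real.continuous_exp.comp_continuousOn hΘ_cont.neg).mul hu_cont
  have hB_cont : ContinuousOn B (Icc ε s) := by
    have := intervalIntegral.continuousOn_primitive_interval
      (a := ε) (b := s) (μ := volume) (f := φ)
      (by rw [uIcc_of_le hεs]; exact hφ_cont.integrableOn_Icc)
    rw [uIcc_of_le hεs] at this
    exact continuousOn_const.add this
  have hB' : ∀ x ∈ Ico ε s, HasDerivWithinAt B (φ x) (Ici x) x := by
    intro x hx
    have hmem : Icc ε s ∈ nhdsWithin x (Ioi x) := by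
      refine mem_nhdsWithin.2 ⟨Iio s, isOpen_Iio, hx.2, ?_⟩
      rintro z ⟨hz1, hz2⟩
      exact ⟨le_trans hx.1 (le_of_lt hz2), le_of_lt hz1⟩
    have hint : IntervalIntegrable φ volume ε x :=
      ContinuousOn.intervalIntegrable_of_Icc hx.1
        (hφ_cont.mono (Icc_subset_Icc le_rfl hx.2.le))
    have hd : HasDerivWithinAt (fun b => ∫ τ in ε..b, φ τ) (φ x) (Ici x) x := by
      refine intervalIntegral.integral_hasDerivWithinAt_right (t := Ioi x) hint
        ⟨Icc ε s, hmem, (hφ_cont.aestronglyMeasurable measurableSet_Icc)⟩ ?_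
      exact (hφ_cont x ⟨hx.1, hx.2.le⟩).mono_of_mem_nhdsWithin hmem
    exact hd.const_add (u ε)
  have key : ∀ x ∈ Icc ε s, f x ≤ B x := by
    refine image_le_of_liminf_slope_right_le_deriv_boundary hf_cont ?_ hB_cont hB' ?_
    · simp [hf, hB, hΘdef, intervalIntegral.integral_same]
    · intro x hx r hr
      apply Filter.Eventually.frequently
      obtain ⟨L, hL, hLt⟩ := hu' x hx
      have hxI : x ∈ Icc ε s := Ico_subset_Icc_self hx
      have hux : 0 ≤ u x := hu_nonneg x hxI
      have hφx : 0 ≤ φ x := hφ_nonneg x hxI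
      have h1ux : (0:ℝ) < 1 + u x := by linarith
      set η : ℝ := (r - φ x) / (2 * (1 + u x)) with hη
      have hηpos : 0 < η := by
        apply div_pos (by linarith) (by linarith)
      have E1 : ∀ᶠ z in nhdsWithin x (Ioi x), slope u x z < L + η :=
        hLt.eventually_lt_const (by linarith)
      have E2 : ∀ᶠ z in nhdsWithin x (Ioi x), z ∈ Ioc x s :=
        eventually_of_mem (Ioc_mem_nhdsGT_of_mem ⟨le_rfl, hx.2⟩) (fun z hz => hz)
      have hΘdiff : ∀ z ∈ Ioc x s, Θ z - Θ x = ∫ τ in Set.Ioc x z, G τ := by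
        intro z hz
        have h1 : IntervalIntegrable G volume ε x := by
          apply IntegrableOn.intervalIntegrable
          rw [uIcc_of_le hx.1]
          exact hG_int.mono_set (Icc_subset_Icc le_rfl hx.2.le)
        have h2 : IntervalIntegrable G volume x z := by
          apply IntegrableOn.intervalIntegrable
          rw [uIcc_of_le hz.1.le]
          exact hG_int.mono_set (Icc_subset_Icc hx.1 hz.2)
        have h3 := intervalIntegral.integral_add_adjacent_intervals h1 h2
        have h4 : (∫ τ in x..z, G τ) = ∫ τ in Set.Ioc x z, G τ :=
          intervalIntegral.integral_of_le hz.1.le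
        simp only [hΘdef]
        rw [← h4]
        linarith [h3]
      have E3 : ∀ᶠ z in nhdsWithin x (Ioi x), (θ x - η) * (z - x) ≤ Θ z - Θ x := by
        rcases le_or_gt (θ x - η) 0 with hc | hc
        · filter_upwards [E2] with z hz
          have h0 : (0:ℝ) ≤ Θ z - Θ x := by
            rw [hΘdiff z hz]
            exact setIntegral_nonneg measurableSet_Ioc (fun τ _ => hG_nonneg τ)
          nlinarith [hz.1]
        · set r' : ℝ := θ x - η with hr'
          have hr'θ : r' < θ x := by linarith
          have hr'g : ENNReal.ofReal r' < g x := by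
            refine lt_of_lt_of_le ?_ (hgθ x hx)
            exact (ENNReal.ofReal_lt_ofReal_iff (by linarith)).2 hr'θ
          have hU : ∀ᶠ σ in nhds x, ENNReal.ofReal r' < g σ := hg_lsc x _ hr'g
          obtain ⟨d, hd, hball⟩ := Metric.eventually_nhds_iff.1 hU
          have E4 : ∀ᶠ z in nhdsWithin x (Ioi x), z ∈ Ioo x (x + d) :=
            eventually_of_mem (Ioo_mem_nhdsGT_of_mem ⟨le_rfl, by linarith⟩) (fun z hz => hz)
          filter_upwards [E2, E4] with z hz hz'
          have hsub : Set.Ioc x z ⊆ {σ | ENNReal.ofReal r' < g σ} := by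
            intro σ hσ
            apply hball
            rw [Real.dist_eq, abs_of_nonneg (by linarith [hσ.1.le] : (0:ℝ) ≤ σ - x)]
            have := hσ.2
            have := hz'.2
            linarith
          have hae : ∀ᵐ σ ∂(volume.restrict (Set.Ioc x z)), r' ≤ G σ := by
            filter_upwards [ae_restrict_of_ae hg_fin, ae_restrict_mem measurableSet_Ioc]
              with σ h1 h2
            have h3 : ENNReal.ofReal r' ≤ g σ := (hsub h2).le
            calc r' = (ENNReal.ofReal r').toReal := (ENNReal.toReal_ofReal (by linarith)).symm
              _ ≤ (g σ).toReal := (ENNReal.toReal_le_toReal ENNReal.ofReal_ne_top h1).2 h3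
          have hGzint : IntegrableOn G (Set.Ioc x z) :=
            hG_int.mono_set (fun τ hτ => ⟨le_trans hx.1 hτ.1.le, le_trans hτ.2 hz.2⟩)
          calc (θ x - η) * (z - x) = ∫ _ in Set.Ioc x z, r' := by
                rw [setIntegral_const, Real.volume_real_Ioc_of_le hz'.1.le]
                rw [smul_eq_mul]; ring
            _ ≤ ∫ τ in Set.Ioc x z, G τ := by
                refine setIntegral_mono_ae_restrict (integrableOn_const ?_) hGzint hae
                rw [Real.volume_Ioc]; exact ENNReal.ofReal_ne_top
            _ = Θ z - Θ x := (hΘdiff z hz).symm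
      filter_upwards [E1, E2, E3] with z h1 h2 h3
      have hzx : x < z := h2.1
      have hΔ : (0:ℝ) < z - x := by linarith
      have hkey : slope f x z = Real.exp (-Θ z) * slope u x z +
          u x * ((Real.exp (-Θ z) - Real.exp (-Θ x)) / (z - x)) := by
        rw [slope_def_field, slope_def_field]
        simp only [hf]
        field_simp
        ring
      have hexpz : (0:ℝ) < Real.exp (-Θ z) := Real.exp_pos _
      have hA : Real.exp (-Θ z) - Real.exp (-Θ x) ≤ -(Θ z - Θ x) * Real.exp (-Θ z) := by
        have h4 := Real.add_one_le_exp (Θ z - Θ x)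
        have h5 : Real.exp (Θ z - Θ x) * Real.exp (-Θ z) = Real.exp (-Θ x) := by
          rw [← Real.exp_add]; ring_nf
        nlinarith
      have e2 : (Real.exp (-Θ z) - Real.exp (-Θ x)) / (z - x) ≤
          -(θ x - η) * Real.exp (-Θ z) := by
        rw [div_le_iff₀ hΔ]
        nlinarith [mul_le_mul_of_nonneg_right h3 hexpz.le]
      have hbr : L + η - u x * (θ x - η) ≤ φ x + η * (1 + u x) := by nlinarith
      have hη2 : φ x + η * (1 + u x) < r := by
        have h6 : η * (1 + u x) = (r - φ x) / 2 := by
          rw [hη]; field_simp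
        rw [h6]; linarith
      have hslope : slope f x z ≤ Real.exp (-Θ z) * (L + η - u x * (θ x - η)) := by
        rw [hkey]
        have t1 : Real.exp (-Θ z) * slope u x z ≤ Real.exp (-Θ z) * (L + η) :=
          mul_le_mul_of_nonneg_left h1.le hexpz.le
        have t2 : u x * ((Real.exp (-Θ z) - Real.exp (-Θ x)) / (z - x)) ≤
            u x * (-(θ x - η) * Real.exp (-Θ z)) :=
          mul_le_mul_of_nonneg_left e2 hux
        nlinarith
      rcases le_or_gt (L + η - u x * (θ x - η)) 0 with hbr0 | hbr0
      · have : slope f x z ≤ 0 := le_trans hslope (mul_nonpos_of_nonneg_of_nonpos hexpz.le hbr0)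
        linarith
      · have hz0 : 0 ≤ Θ z := hΘ_nonneg z ⟨le_trans hx.1 hzx.le, h2.2⟩
        have hexp1 : Real.exp (-Θ z) ≤ 1 := Real.exp_le_one_iff.2 (by linarith)
        calc slope f x z ≤ Real.exp (-Θ z) * (L + η - u x * (θ x - η)) := hslope
          _ ≤ 1 * (L + η - u x * (θ x - η)) := by
              exact mul_le_mul_of_nonneg_right hexp1 hbr0.le
          _ < r := by nlinarith
  have hfs := key s (right_mem_Icc.2 hεs)
  have hεmem : f ε = u ε := by simp [hf, hΘdef, intervalIntegral.integral_same]
  calc u s = Real.exp (Θ s) * (Real.exp (-Θ s) * u s) := by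
        rw [← mul_assoc, ← Real.exp_add]; simp
    _ ≤ Real.exp (Θ s) * B s := mul_le_mul_of_nonneg_left hfs (Real.exp_pos _).le
    _ = Real.exp (∫ τ in ε..s, (g τ).toReal) * (u ε + ∫ τ in ε..s, φ τ) := rfl

/-- Scalar integrated form of the Raychaudhuri equation estimate (Section 8.1):
if `y' + h·y = F` on `(0,S]` with `h ≥ 2/s - θ`, `∫₀^S θ ≤ Λ`, and `s²·y → 0`
as `s → 0⁺`, then `|y s| ≤ e^Λ · s^{-2} · ∫₀^s σ²|F σ| dσ`. -/
theorem stmt_7 (S Λ : ℝ) (hS : 0 < S) (hΛ : 0 ≤ Λ)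
    (θ h F y : ℝ → ℝ)
    (hθ_nonneg : ∀ s ∈ Ioc (0:ℝ) S, 0 ≤ θ s)
    (hθ_int : IntegrableOn θ (Ioc 0 S))
    (hθ_bound : (∫ τ in (0:ℝ)..S, θ τ) ≤ Λ)
    (hh : ∀ s ∈ Ioc (0:ℝ) S, 2 / s - θ s ≤ h s)
    (hF_cont : ContinuousOn F (Ioc 0 S))
    (hF_int : IntegrableOn (fun σ => σ ^ 2 * |F σ|) (Ioc 0 S))
    (hy : ∀ s ∈ Ioc (0:ℝ) S, HasDerivAt y (F s - h s * y s) s)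
    (hy0 : Filter.Tendsto (fun s => s ^ 2 * y s) (nhdsWithin 0 (Ioi 0)) (nhds 0)) :
    ∀ s ∈ Ioc (0:ℝ) S,
      |y s| ≤ Real.exp Λ * (s ^ 2)⁻¹ * ∫ σ in (0:ℝ)..s, σ ^ 2 * |F σ| := by
  intro s hs
  obtain ⟨hs0, hsS⟩ := hs
  set φ : ℝ → ℝ := fun σ => σ ^ 2 * |F σ| with hφdef
  set I : ℝ := ∫ σ in (0:ℝ)..s, φ σ with hIdef
  have hφ_int_s : IntegrableOn φ (Ioc 0 s) := hF_int.mono_set (Ioc_subset_Ioc_right hsS)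
  have hI0 : 0 ≤ I := by
    rw [hIdef, intervalIntegral.integral_of_le hs0.le]
    exact setIntegral_nonneg measurableSet_Ioc (fun σ _ => by positivity)
  have hs2 : (0:ℝ) < s ^ 2 := by positivity
  -- reduce to `s² |y s| ≤ exp Λ * I`
  suffices hkey : s ^ 2 * |y s| ≤ Real.exp Λ * I by
    calc |y s| = (s ^ 2 * |y s|) / s ^ 2 := by field_simp
      _ ≤ (Real.exp Λ * I) / s ^ 2 := by gcongr
      _ = Real.exp Λ * (s ^ 2)⁻¹ * I := by ring
  -- it suffices to prove the bound with Λ + δ and I + δ for each δ > 0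
  suffices hδ : ∀ δ > (0:ℝ), s ^ 2 * |y s| ≤ Real.exp (Λ + δ) * (I + δ) by
    have hT : Filter.Tendsto (fun δ : ℝ => Real.exp (Λ + δ) * (I + δ))
        (nhdsWithin 0 (Ioi 0)) (nhds (Real.exp Λ * I)) := by
      have hc : Continuous (fun δ : ℝ => Real.exp (Λ + δ) * (I + δ)) := by continuity
      have := hc.tendsto 0
      simp only [add_zero] at this
      exact this.mono_left nhdsWithin_le_nhds
    refine ge_of_tendsto hT ?_
    filter_upwards [self_mem_nhdsWithin] with δ hδ'
    exact hδ δ hδ'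
  intro δ hδpos
  -- Vitali–Carathéodory majorant of θ
  set f₀ : ℝ → NNReal := fun x => ((Ioc (0:ℝ) S).indicator θ x).toNNReal with hf₀def
  have hθind : Integrable ((Ioc (0:ℝ) S).indicator θ) :=
    hθ_int.integrable_indicator measurableSet_Ioc
  have hf₀meas : AEMeasurable f₀ :=
    measurable_real_toNNReal.comp_aemeasurable hθind.aemeasurable
  obtain ⟨g, hg1, hg_lsc, hg_int⟩ :=
    exists_lt_lowerSemicontinuous_lintegral_ge_of_aemeasurable (μ := volume) f₀ hf₀meas
      (ε := ENNReal.ofReal δ) (by simp [ENNReal.ofReal_eq_zero, not_le, hδpos])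
  have hlin : (∫⁻ x, (f₀ x : ENNReal)) ≤ ENNReal.ofReal Λ := by
    have h1 : ∀ x, (f₀ x : ENNReal) = ENNReal.ofReal ((Ioc (0:ℝ) S).indicator θ x) :=
      fun x => rfl
    simp only [h1]
    rw [← ofReal_integral_eq_lintegral_ofReal hθind ?_]
    · apply ENNReal.ofReal_le_ofReal
      rw [integral_indicator measurableSet_Ioc]
      rwa [intervalIntegral.integral_of_le hS.le] at hθ_bound
    · filter_upwards with x
      by_cases hx : x ∈ Ioc (0:ℝ) S
      · rw [indicator_of_mem hx]; exact hθ_nonneg x hx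
      · simp [indicator_of_notMem hx]
  have hgtot : (∫⁻ x, g x) ≤ ENNReal.ofReal (Λ + δ) := by
    rw [ENNReal.ofReal_add hΛ hδpos.le]
    exact le_trans hg_int (add_le_add hlin le_rfl)
  have hg_ne_top : (∫⁻ x, g x) ≠ ⊤ :=
    (lt_of_le_of_lt hgtot ENNReal.ofReal_lt_top).ne
  have hgmeas : Measurable g := hg_lsc.measurable
  have hg_lt_top : ∀ᵐ x, g x < ⊤ := ae_lt_top hgmeas hg_ne_top
  have hg_fin : ∀ᵐ x, g x ≠ ⊤ := hg_lt_top.mono fun x hx => hx.ne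
  set G : ℝ → ℝ := fun x => (g x).toReal with hGdef
  have hG_int : Integrable G :=
    integrable_toReal_of_lintegral_ne_top hgmeas.aemeasurable hg_ne_top
  have hG_nonneg : ∀ x, 0 ≤ G x := fun _ => ENNReal.toReal_nonneg
  have hG_total : (∫ x, G x) ≤ Λ + δ := by
    rw [hGdef, integral_toReal hgmeas.aemeasurable hg_lt_top]
    exact ENNReal.toReal_le_of_le_ofReal (by linarith) hgtot
  have hGset : ∀ a b : ℝ, a ≤ b → (∫ τ in a..b, G τ) ≤ Λ + δ := by
    intro a b hab
    rw [intervalIntegral.integral_of_le hab]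
    exact le_trans (setIntegral_le_integral hG_int (ae_of_all _ hG_nonneg)) hG_total
  -- the function w = s² y and u = |w|
  set w : ℝ → ℝ := fun x => x ^ 2 * y x with hwdef
  have hw_deriv : ∀ x ∈ Ioc (0:ℝ) S,
      HasDerivAt w (x ^ 2 * F x - (h x - 2 / x) * w x) x := by
    intro x hx
    have hx0 : x ≠ 0 := ne_of_gt hx.1
    have h1 : HasDerivAt (fun t : ℝ => t ^ 2) (2 * x) x := by
      simpa using hasDerivAt_pow 2 x
    have h2 := h1.mul (hy x hx)
    refine h2.congr_deriv ?_
    simp only [hwdef]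
    field_simp
    ring
  have hw_cont : ContinuousOn w (Ioc 0 S) := fun x hx =>
    (hw_deriv x hx).continuousAt.continuousWithinAt
  set u : ℝ → ℝ := fun x => |w x| with hudef
  have hu_cont : ContinuousOn u (Ioc 0 S) := hw_cont.abs
  have hφ_cont : ContinuousOn φ (Ioc 0 S) :=
    ((continuous_pow 2).continuousOn.mul hF_cont.abs)
  -- main estimate for each ε ∈ (0, s]
  have main : ∀ ε ∈ Ioc (0:ℝ) s, u s ≤ Real.exp (Λ + δ) * (u ε + I) := by
    intro ε hε
    have hsub : Icc ε s ⊆ Ioc 0 S := fun z hz =>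
      ⟨lt_of_lt_of_le hε.1 hz.1, le_trans hz.2 hsS⟩
    have hu'main : ∀ x ∈ Ico ε s, ∃ L, L ≤ φ x + θ x * u x ∧
        Filter.Tendsto (slope u x) (nhdsWithin x (Ioi x)) (nhds L) := by
      intro x hx
      have hxI : x ∈ Ioc (0:ℝ) S := hsub (Ico_subset_Icc_self hx)
      have hwx := hw_deriv x hxI
      have hpx : -(h x - 2 / x) ≤ θ x := by
        have := hh x hxI; linarith
      have hxabs : |x ^ 2 * F x| = x ^ 2 * |F x| := by
        rw [abs_mul, abs_of_nonneg (sq_nonneg x)]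
      have hmono : nhdsWithin x (Ioi x) ≤ nhdsWithin x ({x}ᶜ) :=
        nhdsWithin_mono x (fun z hz => ne_of_gt hz)
      rcases lt_trichotomy (w x) 0 with hneg | hzero | hpos
      · -- w x < 0 : u = -w near x
        refine ⟨-(x ^ 2 * F x - (h x - 2 / x) * w x), ?_, ?_⟩
        · have hux : u x = -w x := abs_of_neg hneg
          have hb1 : -(x ^ 2 * F x) ≤ x ^ 2 * |F x| := by
            rw [← hxabs]; exact neg_le_abs _
          have hb2 : -(h x - 2 / x) * u x ≤ θ x * u x :=
            mul_le_mul_of_nonneg_right hpx (abs_nonneg _)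
          simp only [hφdef, hux] at *
          nlinarith
        · have hev : ∀ᶠ z in nhds x, w z < 0 :=
            (hwx.continuousAt).eventually_lt_const hneg
          have heq : (fun z => -w z) =ᶠ[nhds x] u := by
            filter_upwards [hev] with z hz
            simp [hudef, abs_of_neg hz]
          have hd : HasDerivAt u (-(x ^ 2 * F x - (h x - 2 / x) * w x)) x :=
            (hwx.neg).congr_of_eventuallyEq heq.symm
          exact (hasDerivAt_iff_tendsto_slope.1 hd).mono_left hmono
      · -- w x = 0
        refine ⟨x ^ 2 * |F x|, ?_, ?_⟩
        · have hux : u x = 0 := by simp [hudef, hzero]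
          simp only [hφdef, hux]
          nlinarith
        · have h1 : Filter.Tendsto (slope w x) (nhdsWithin x (Ioi x))
              (nhds (x ^ 2 * F x - (h x - 2 / x) * w x)) :=
            (hasDerivAt_iff_tendsto_slope.1 hwx).mono_left hmono
          have h2 : Filter.Tendsto (fun z => |slope w x z|) (nhdsWithin x (Ioi x))
              (nhds (x ^ 2 * |F x|)) := by
            have := h1.abs
            rw [hzero] at this
            simpa [hxabs] using this
          refine h2.congr' ?_
          filter_upwards [self_mem_nhdsWithin] with z hz
          have hzx : (0:ℝ) < z - x := by
            simp only [mem_Ioi] at hz; linarith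
          rw [slope_def_field, slope_def_field, abs_div, abs_of_pos hzx]
          simp [hudef, hzero]
      · -- w x > 0 : u = w near x
        refine ⟨x ^ 2 * F x - (h x - 2 / x) * w x, ?_, ?_⟩
        · have hux : u x = w x := abs_of_pos hpos
          have hb1 : x ^ 2 * F x ≤ x ^ 2 * |F x| := by
            rw [← hxabs]; exact le_abs_self _
          have hb2 : -(h x - 2 / x) * u x ≤ θ x * u x :=
            mul_le_mul_of_nonneg_right hpx (abs_nonneg _)
          simp only [hφdef, hux] at *
          nlinarith
        · have hev : ∀ᶠ z in nhds x, 0 < w z :=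
            (hwx.continuousAt).eventually_const_lt hpos
          have heq : w =ᶠ[nhds x] u := by
            filter_upwards [hev] with z hz
            simp [hudef, abs_of_pos hz]
          have hd : HasDerivAt u (x ^ 2 * F x - (h x - 2 / x) * w x) x :=
            hwx.congr_of_eventuallyEq heq.symm
          exact (hasDerivAt_iff_tendsto_slope.1 hd).mono_left hmono
    have hgθmain : ∀ x ∈ Ico ε s, ENNReal.ofReal (θ x) ≤ g x := by
      intro x hx
      have hxI : x ∈ Ioc (0:ℝ) S := hsub (Ico_subset_Icc_self hx)
      refine le_of_lt (lt_of_le_of_lt ?_ (hg1 x))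
      have hfx : (f₀ x : ENNReal) = ENNReal.ofReal (θ x) := by
        simp [hf₀def, indicator_of_mem hxI, ENNReal.ofReal]
      rw [hfx]
    have happ := my_gronwall_aux hε.1 hε.2 u φ θ g (hu_cont.mono hsub)
      (fun x _ => abs_nonneg _) hu'main (hφ_cont.mono hsub)
      (fun x _ => mul_nonneg (sq_nonneg x) (abs_nonneg _)) hg_lsc hgθmain hg_fin hG_int.integrableOn
    refine le_trans happ ?_
    have h1 : (∫ τ in ε..s, φ τ) ≤ I := by
      rw [hIdef, intervalIntegral.integral_of_le hε.2,
        intervalIntegral.integral_of_le hs0.le]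
      refine setIntegral_mono_set hφ_int_s ?_ ?_
      · filter_upwards with σ
        simp only [Pi.zero_apply]
        positivity
      · exact HasSubset.Subset.eventuallyLE (Ioc_subset_Ioc hε.1.le le_rfl)
    have h2 : (∫ τ in ε..s, G τ) ≤ Λ + δ := hGset ε s hε.2
    have h3 : 0 ≤ u ε + ∫ τ in ε..s, φ τ := by
      have h4 : (0:ℝ) ≤ ∫ τ in ε..s, φ τ :=
        intervalIntegral.integral_nonneg hε.2 (fun τ hτ => by positivity)
      have h5 := abs_nonneg (w ε)
      simp only [hudef]; linarith
    calc Real.exp (∫ τ in ε..s, G τ) * (u ε + ∫ τ in ε..s, φ τ)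
        ≤ Real.exp (Λ + δ) * (u ε + ∫ τ in ε..s, φ τ) := by
          exact mul_le_mul_of_nonneg_right (Real.exp_le_exp.2 h2) h3
      _ ≤ Real.exp (Λ + δ) * (u ε + I) := by
          refine mul_le_mul_of_nonneg_left ?_ (Real.exp_pos _).le
          linarith
  -- take limit ε → 0⁺
  have hyε : Filter.Tendsto u (nhdsWithin 0 (Ioi 0)) (nhds 0) := by
    have := hy0.abs
    simpa using this
  have hT2 : Filter.Tendsto (fun ε => Real.exp (Λ + δ) * (u ε + I))
      (nhdsWithin 0 (Ioi 0)) (nhds (Real.exp (Λ + δ) * (0 + I))) :=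
    tendsto_const_nhds.mul (hyε.add tendsto_const_nhds)
  have hev : ∀ᶠ ε in nhdsWithin (0:ℝ) (Ioi 0), u s ≤ Real.exp (Λ + δ) * (u ε + I) := by
    filter_upwards [eventually_of_mem (Ioc_mem_nhdsGT_of_mem ⟨le_rfl, hs0⟩) (fun z hz => hz)]
      with ε hε
    exact main ε hε
  have hus : u s ≤ Real.exp (Λ + δ) * (0 + I) := ge_of_tendsto hT2 hev
  have husq : u s = s ^ 2 * |y s| := by
    simp only [hudef, hwdef, abs_mul, abs_of_nonneg (sq_nonneg s)]
  rw [← husq]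
  refine le_trans hus ?_
  have := Real.exp_pos (Λ + δ)
  nlinarith
end
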